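/- Let X be a set, let g₀ and g₁ be bijections of X, and suppose there exists a subset R ⊆ X such that: (1) g₀(R) is a proper subset of R; (2) g₁ is the identity on X ∖ R; (3) g₁ agrees with g₀ on g₀(R). Then, in the permutation group of X, the relations g₀²g₁g₀⁻² = (g₁g₀)g₁(g₁g₀)⁻¹ and g₀³g₁g₀⁻³ = (g₁g₀²)g₁(g₁g₀²)⁻¹ hold, and moreover g₀ and g₁ do not commute: g₀g₁ ≠ g₁g₀. -/

import Mathlib

/-- If `d` is the identity on `R` and `b` is the identity off `R`, they commute. -/
lemma comm_aux {X : Type*} (d b : Equiv.Perm X) (R : Set X)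
    (hd : ∀ x ∈ R, d x = x) (hb : ∀ x ∉ R, b x = x) : d * b = b * d := by
  ext x
  by_cases hx : x ∈ R
  · have hbx : b x ∈ R := by
      by_contra h
      have h' : b (b x) = b x := hb _ h
      have : b x = x := b.injective h'
      exact h (this.symm ▸ hx)
    simp [Equiv.Perm.mul_apply, hd _ hbx, hd _ hx]
  · have hdx : d x ∉ R := by
      intro h
      have h' : d (d x) = d x := hd _ h
      have : d x = x := d.injective h'
      exact hx (this ▸ h)
    simp [Equiv.Perm.mul_apply, hb _ hdx, hb _ hx]

/-- If `g₀, g₁` are bijections of a set `X` and `R ⊆ X` satisfies the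
ping-pong hypotheses for Thompson's group `F`, then the two defining relations of `F`
hold for `g₀, g₁` in the permutation group of `X`, and `g₀` and `g₁` do not commute. -/
theorem stmt17 {X : Type*} (g₀ g₁ : Equiv.Perm X) (R : Set X)
    (h1 : (⇑g₀) '' R ⊂ R) (h2 : ∀ x ∉ R, g₁ x = x)
    (h3 : ∀ x ∈ (⇑g₀) '' R, g₁ x = g₀ x) :
    (g₀ ^ 2 * g₁ * (g₀ ^ 2)⁻¹ = (g₁ * g₀) * g₁ * (g₁ * g₀)⁻¹ ∧
      g₀ ^ 3 * g₁ * (g₀ ^ 3)⁻¹ = (g₁ * g₀ ^ 2) * g₁ * (g₁ * g₀ ^ 2)⁻¹) ∧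
    g₀ * g₁ ≠ g₁ * g₀ := by
  have hsub : (⇑g₀) '' R ⊆ R := h1.subset
  -- first relation
  have key1 : ∀ x ∈ R, (g₀⁻¹ * g₁⁻¹ * g₀ ^ 2) x = x := by
    intro x hx
    have h0 : g₀ x ∈ (⇑g₀) '' R := ⟨x, hx, rfl⟩
    have h4 : g₁⁻¹ (g₀ (g₀ x)) = g₀ x := by
      rw [← h3 _ h0]; exact g₁.symm_apply_apply _
    simp [Equiv.Perm.mul_apply, sq, h4]
  have hc1 := comm_aux (g₀⁻¹ * g₁⁻¹ * g₀ ^ 2) g₁ R key1 h2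
  have rel1 : g₀ ^ 2 * g₁ * (g₀ ^ 2)⁻¹ = (g₁ * g₀) * g₁ * (g₁ * g₀)⁻¹ := by
    calc g₀ ^ 2 * g₁ * (g₀ ^ 2)⁻¹
        = (g₁ * g₀) * ((g₀⁻¹ * g₁⁻¹ * g₀ ^ 2) * g₁) * (g₀ ^ 2)⁻¹ := by group
      _ = (g₁ * g₀) * (g₁ * (g₀⁻¹ * g₁⁻¹ * g₀ ^ 2)) * (g₀ ^ 2)⁻¹ := by rw [hc1]
      _ = (g₁ * g₀) * g₁ * (g₁ * g₀)⁻¹ := by group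
  -- second relation
  have key2 : ∀ x ∈ R, ((g₀ ^ 2)⁻¹ * g₁⁻¹ * g₀ ^ 3) x = x := by
    intro x hx
    have hx1 : g₀ x ∈ R := hsub ⟨x, hx, rfl⟩
    have h0 : g₀ (g₀ x) ∈ (⇑g₀) '' R := ⟨g₀ x, hx1, rfl⟩
    have h4 : g₁⁻¹ (g₀ (g₀ (g₀ x))) = g₀ (g₀ x) := by
      rw [← h3 _ h0]; exact g₁.symm_apply_apply _
    simp [Equiv.Perm.mul_apply, pow_succ, h4]
  have hc2 := comm_aux ((g₀ ^ 2)⁻¹ * g₁⁻¹ * g₀ ^ 3) g₁ R key2 h2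
  have rel2 : g₀ ^ 3 * g₁ * (g₀ ^ 3)⁻¹ = (g₁ * g₀ ^ 2) * g₁ * (g₁ * g₀ ^ 2)⁻¹ := by
    calc g₀ ^ 3 * g₁ * (g₀ ^ 3)⁻¹
        = (g₁ * g₀ ^ 2) * (((g₀ ^ 2)⁻¹ * g₁⁻¹ * g₀ ^ 3) * g₁) * (g₀ ^ 3)⁻¹ := by group
      _ = (g₁ * g₀ ^ 2) * (g₁ * ((g₀ ^ 2)⁻¹ * g₁⁻¹ * g₀ ^ 3)) * (g₀ ^ 3)⁻¹ := by rw [hc2]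
      _ = (g₁ * g₀ ^ 2) * g₁ * (g₁ * g₀ ^ 2)⁻¹ := by group
  refine ⟨⟨rel1, rel2⟩, ?_⟩
  -- noncommutativity
  intro heq
  obtain ⟨r, hrR, hr⟩ := Set.exists_of_ssubset h1
  have ha : g₀⁻¹ r ∉ R := by
    intro h
    exact hr ⟨g₀⁻¹ r, h, g₀.apply_symm_apply r⟩
  have hb1 : g₁ (g₀⁻¹ r) = g₀⁻¹ r := h2 _ ha
  have e1 : (g₀ * g₁) (g₀⁻¹ r) = (g₁ * g₀) (g₀⁻¹ r) := by rw [heq]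
  have hfix : g₁ r = r := by
    have : r = g₁ r := by
      rw [Equiv.Perm.mul_apply, Equiv.Perm.mul_apply, hb1] at e1
      simpa using e1
    exact this.symm
  have e2 : (g₀ * g₁) r = (g₁ * g₀) r := by rw [heq]
  have h0 : g₀ r ∈ (⇑g₀) '' R := ⟨r, hrR, rfl⟩
  have e3 : g₀ r = g₀ (g₀ r) := by
    simpa [Equiv.Perm.mul_apply, hfix, h3 _ h0] using e2
  have : r = g₀ r := g₀.injective e3
  exact hr ⟨r, hrR, this.symm⟩
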